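/- Let g_ℓ(u) = u_ℓ^3 G_ℓ(u) with G_ℓ(u) = sum_{k=0}^{n-2} (-1)^k (k+1)/(k+3) u_ℓ^k S_{n,n-2-k}(u), and let p_m = (1,...,1,0,...,0) with m ones (1 ≤ m ≤ n-1). Then the Jacobian matrix Dg(p_m) has rank 1: its last n-1-m rows vanish and its first m rows are all equal to one another. -/

import Mathlib

open MvPolynomial Finset

lemma cardS (N m : ℕ) (hm : m ≤ N) :
    (Finset.filter (fun i : Fin N => (i:ℕ) < m) Finset.univ).card = m := by
  have h : Finset.filter (fun i : Fin N => (i:ℕ) < m) Finset.univ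
      = Finset.map (Fin.castLEEmb hm) Finset.univ := by
    ext i
    simp only [Finset.mem_filter, Finset.mem_univ, true_and, Finset.mem_map,
      Fin.castLEEmb_apply]
    constructor
    · intro h; exact ⟨⟨i, h⟩, by ext; simp⟩
    · rintro ⟨j, rfl⟩; simpa using j.isLt
  rw [h]; simp

lemma eval_esymm (N m : ℕ) (hm : m ≤ N) (r : ℕ) :
    eval (fun i : Fin N => if (i:ℕ) < m then (1:ℂ) else 0)
      (esymm (Fin N) ℂ r) = (m.choose r : ℂ) := by
  classical
  rw [esymm, map_sum]
  have h1 : ∀ t ∈ powersetCard r (univ : Finset (Fin N)),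
      eval (fun i : Fin N => if (i:ℕ) < m then (1:ℂ) else 0) (∏ i ∈ t, X i)
      = if (∀ i ∈ t, (i:ℕ) < m) then 1 else 0 := by
    intro t _
    rw [map_prod]
    by_cases h : ∀ i ∈ t, (i:ℕ) < m
    · rw [if_pos h]
      exact Finset.prod_eq_one (fun i hi => by simp [eval_X, h i hi])
    · rw [if_neg h]
      push_neg at h
      obtain ⟨i, hi, hlt⟩ := h
      exact Finset.prod_eq_zero hi (by simp [eval_X, hlt])
  rw [Finset.sum_congr rfl h1, Finset.sum_boole]
  have h2 : Finset.filter (fun t : Finset (Fin N) => ∀ i ∈ t, (i:ℕ) < m)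
        (powersetCard r (univ : Finset (Fin N)))
      = powersetCard r (Finset.filter (fun i : Fin N => (i:ℕ) < m) Finset.univ) := by
    ext t
    simp only [Finset.mem_filter, Finset.mem_powersetCard, Finset.subset_iff, Finset.mem_univ,
      true_and]
    tauto
  rw [h2, Finset.card_powersetCard, cardS N m hm]


lemma pderiv_prod_X (N : ℕ) (t : Finset (Fin N)) (j : Fin N) :
    pderiv j (∏ i ∈ t, (X i : MvPolynomial (Fin N) ℂ))
      = if j ∈ t then ∏ i ∈ t.erase j, (X i : MvPolynomial (Fin N) ℂ) else 0 := by
  classical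
  induction t using Finset.induction_on with
  | empty => simp
  | @insert a s ha ih =>
    rw [Finset.prod_insert ha, pderiv_mul, ih]
    by_cases hj : j = a
    · subst hj
      rw [if_neg ha, pderiv_X_self]
      simp [Finset.erase_insert ha]
    · rw [pderiv_X_of_ne (Ne.symm hj), zero_mul, zero_add]
      by_cases hjs : j ∈ s
      · rw [if_pos hjs, if_pos (Finset.mem_insert_of_mem hjs),
          Finset.erase_insert_of_ne (Ne.symm hj),
          Finset.prod_insert (fun h => ha (Finset.mem_of_mem_erase h))]
      · rw [if_neg hjs, mul_zero, if_neg (by simp [hj, hjs])]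

lemma eval_pderiv_esymm (N m : ℕ) (hm : m ≤ N) (r : ℕ) (j : Fin N) :
    eval (fun i : Fin N => if (i:ℕ) < m then (1:ℂ) else 0)
      (pderiv j (esymm (Fin N) ℂ (r+1)))
      = if (j:ℕ) < m then ((m-1).choose r : ℂ) else (m.choose r : ℂ) := by
  classical
  rw [esymm, map_sum, map_sum]
  have h1 : ∀ t ∈ powersetCard (r+1) (univ : Finset (Fin N)),
      eval (fun i : Fin N => if (i:ℕ) < m then (1:ℂ) else 0)
        (pderiv j (∏ i ∈ t, (X i : MvPolynomial (Fin N) ℂ)))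
      = if (j ∈ t ∧ ∀ i ∈ t.erase j, (i:ℕ) < m) then 1 else 0 := by
    intro t _
    rw [pderiv_prod_X]
    by_cases hj : j ∈ t
    · rw [if_pos hj, map_prod]
      by_cases h : ∀ i ∈ t.erase j, (i:ℕ) < m
      · rw [if_pos ⟨hj, h⟩]
        exact Finset.prod_eq_one (fun i hi => by simp [eval_X, h i hi])
      · rw [if_neg (by tauto)]
        push_neg at h
        obtain ⟨i, hi, hlt⟩ := h
        exact Finset.prod_eq_zero hi (by simp [eval_X, hlt])
    · rw [if_neg hj, if_neg (by tauto), map_zero]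
  rw [Finset.sum_congr rfl h1, Finset.sum_boole]
  set S := Finset.filter (fun i : Fin N => (i:ℕ) < m) Finset.univ with hS
  have key : (Finset.filter (fun t : Finset (Fin N) => j ∈ t ∧ ∀ i ∈ t.erase j, (i:ℕ) < m)
      (powersetCard (r+1) (univ : Finset (Fin N)))).card
      = (powersetCard r (S.erase j)).card := by
    refine Finset.card_nbij' (fun t => t.erase j) (fun t' => insert j t') ?_ ?_ ?_ ?_
    · intro t ht
      simp only [Finset.mem_coe, Finset.mem_filter, Finset.mem_powersetCard] at ht
      obtain ⟨⟨_, hcard⟩, hjt, hsub⟩ := ht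
      rw [Finset.mem_coe, Finset.mem_powersetCard]
      constructor
      · intro x hx
        rw [Finset.mem_erase]
        exact ⟨(Finset.mem_erase.mp hx).1, by simp [hS, (hsub x hx)]⟩
      · rw [Finset.card_erase_of_mem hjt, hcard]; omega
    · intro t' ht'
      rw [Finset.mem_coe, Finset.mem_powersetCard] at ht'
      obtain ⟨hsub, hcard⟩ := ht'
      have hjt' : j ∉ t' := fun h => (Finset.mem_erase.mp (hsub h)).1 rfl
      simp only [Finset.mem_coe, Finset.mem_filter, Finset.mem_powersetCard]
      refine ⟨⟨Finset.subset_univ _, by rw [Finset.card_insert_of_notMem hjt', hcard]⟩,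
        Finset.mem_insert_self _ _, ?_⟩
      intro i hi
      rw [Finset.erase_insert hjt'] at hi
      have := hsub hi
      rw [Finset.mem_erase, hS, Finset.mem_filter] at this
      exact this.2.2
    · intro t ht
      simp only [Finset.mem_coe, Finset.mem_filter] at ht
      exact Finset.insert_erase ht.2.1
    · intro t' ht'
      rw [Finset.mem_coe, Finset.mem_powersetCard] at ht'
      have hjt' : j ∉ t' := fun h => (Finset.mem_erase.mp (ht'.1 h)).1 rfl
      exact Finset.erase_insert hjt'
  rw [key, Finset.card_powersetCard]
  have hScard : S.card = m := by
    rw [hS]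
    have h : Finset.filter (fun i : Fin N => (i:ℕ) < m) Finset.univ
        = Finset.map (Fin.castLEEmb hm) Finset.univ := by
      ext i
      simp only [Finset.mem_filter, Finset.mem_univ, true_and, Finset.mem_map,
        Fin.castLEEmb_apply]
      constructor
      · intro h; exact ⟨⟨i, h⟩, by ext; simp⟩
      · rintro ⟨j, rfl⟩; simpa using j.isLt
    rw [h]; simp
  by_cases hjm : (j:ℕ) < m
  · rw [if_pos hjm, Finset.card_erase_of_mem (by simp [hS, hjm]), hScard]
  · rw [if_neg hjm, Finset.erase_eq_of_notMem (by simp [hS, hjm]), hScard]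


lemma alt0 (t N : ℕ) (h1 : 1 ≤ t) (h2 : t < N) :
    ∑ r ∈ range N, (-1:ℂ)^r * (t.choose r) = 0 := by
  have hsub : ∑ r ∈ range N, (-1:ℂ)^r * (t.choose r)
      = ∑ r ∈ range (t+1), (-1:ℂ)^r * (t.choose r) := by
    refine (Finset.sum_subset (by intro x hx; simp at hx ⊢; omega) ?_).symm
    intro x _ hx
    simp only [Finset.mem_range, not_lt] at hx
    rw [Nat.choose_eq_zero_of_lt (by omega)]
    simp
  rw [hsub]
  have := Int.alternating_sum_range_choose_of_ne (n := t) (by omega)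
  have : ((∑ i ∈ range (t + 1), (-1:ℤ) ^ i * ↑(t.choose i) : ℤ) : ℂ) = 0 := by rw [this]; simp
  push_cast at this
  convert this using 2

lemma alt1 (t N : ℕ) (h1 : 2 ≤ t) (h2 : t < N) :
    ∑ r ∈ range N, (-1:ℂ)^r * (t.choose r) * r = 0 := by
  obtain ⟨M, rfl⟩ : ∃ M, N = M + 1 := ⟨N-1, by omega⟩
  rw [Finset.sum_range_succ']
  simp only [Nat.cast_zero, mul_zero, add_zero]
  have key : ∀ r, (-1:ℂ)^(r+1) * (t.choose (r+1)) * ((r+1 : ℕ) : ℂ)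
      = -(t : ℂ) * ((-1:ℂ)^r * ((t-1).choose r)) := by
    intro r
    have h := Nat.add_one_mul_choose_eq (t-1) r
    rw [Nat.sub_add_cancel (by omega)] at h
    have hc : ((t * (t-1).choose r : ℕ) : ℂ) = ((t.choose (r+1) * (r+1) : ℕ) : ℂ) := by
      rw [h]
    push_cast at hc
    push_cast
    rw [pow_succ]
    linear_combination ((-1:ℂ)^r) * hc
  rw [Finset.sum_congr rfl (fun r _ => key r), ← Finset.mul_sum]
  rw [alt0 (t-1) M (by omega) (by omega), mul_zero]


lemma pascal_sum (t : ℕ) (c : ℂ) :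
    ∑ r ∈ range (t+2), (-1:ℂ)^r * ((t+1).choose r : ℂ) / (c - (r:ℂ))
    = (∑ r ∈ range (t+1), (-1:ℂ)^r * (t.choose r : ℂ) / (c - (r:ℂ)))
      - ∑ r ∈ range (t+1), (-1:ℂ)^r * (t.choose r : ℂ) / ((c-1) - (r:ℂ)) := by
  have e1 := Finset.sum_range_succ' (fun r : ℕ => (-1:ℂ)^r * ((t+1).choose r : ℂ) / (c - (r:ℂ))) (t+1)
  have e2 := Finset.sum_range_succ' (fun r : ℕ => (-1:ℂ)^r * (t.choose r : ℂ) / (c - (r:ℂ))) (t+1)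
  have e3 := Finset.sum_range_succ (fun r : ℕ => (-1:ℂ)^r * (t.choose r : ℂ) / (c - (r:ℂ))) (t+1)
  have e5 : ∑ k ∈ range (t+1), (-1:ℂ)^(k+1) * (((t+1).choose (k+1) : ℕ) : ℂ) / (c - ((k+1:ℕ):ℂ))
      = (∑ k ∈ range (t+1), (-1:ℂ)^(k+1) * ((t.choose (k+1) : ℕ):ℂ) / (c - ((k+1:ℕ):ℂ)))
        - ∑ k ∈ range (t+1), (-1:ℂ)^k * ((t.choose k : ℕ):ℂ) / ((c-1) - (k:ℂ)) := by
    rw [← Finset.sum_sub_distrib]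
    refine Finset.sum_congr rfl fun k _ => ?_
    push_cast [Nat.choose_succ_succ]
    ring
  have e6 : (((t+1).choose 0 : ℕ):ℂ) = ((t.choose 0 : ℕ):ℂ) := by norm_num
  have e7 : ((t.choose (t+1) : ℕ):ℂ) = 0 := by
    rw [Nat.choose_eq_zero_of_lt (by omega)]; simp
  linear_combination (norm := (push_cast; ring1)) e1 + e5 - e2 + e3
    + (1/(c - ((0:ℕ):ℂ))) * e6 + ((-1:ℂ)^(t+1)/(c - ((t+1:ℕ):ℂ))) * e7

lemma Tval : ∀ (t n : ℕ), t + 1 ≤ n →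
    ∑ r ∈ range (t+1), (-1:ℂ)^r * (t.choose r : ℂ) / ((n:ℂ) - (r:ℂ))
    = (-1:ℂ)^t * (t.factorial : ℂ) * ((n - t - 1).factorial : ℂ) / (n.factorial : ℂ) := by
  intro t
  induction t with
  | zero =>
    intro n hn
    obtain ⟨a, rfl⟩ : ∃ a, n = a + 1 := ⟨n-1, by omega⟩
    rw [Finset.sum_range_one]
    rw [show a + 1 - 0 - 1 = a from by omega]
    rw [show (a+1).factorial = (a+1) * a.factorial from Nat.factorial_succ a]
    have h1 : (((a+1:ℕ)):ℂ) ≠ 0 := Nat.cast_ne_zero.mpr (Nat.succ_ne_zero a)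
    have h2 : ((a.factorial : ℂ)) ≠ 0 := Nat.cast_ne_zero.mpr (Nat.factorial_ne_zero a)
    push_cast at h1 ⊢
    field_simp
    simp
  | succ t ih =>
    intro n hn
    obtain ⟨a, rfl⟩ : ∃ a, n = t + 2 + a := ⟨n - (t+2), by omega⟩
    have step1 := pascal_sum t ((t+2+a : ℕ) : ℂ)
    have hc1 : ((t+2+a : ℕ) : ℂ) - 1 = ((t+1+a : ℕ) : ℂ) := by push_cast; ring
    rw [hc1] at step1
    rw [show t+1+1 = t+2 from rfl, step1, ih (t+2+a) (by omega), ih (t+1+a) (by omega)]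
    rw [show t+2+a-t-1 = a + 1 from by omega, show t+1+a-t-1 = a from by omega,
      show t+2+a-(t+1)-1 = a from by omega]
    rw [show (a+1).factorial = (a+1) * a.factorial from Nat.factorial_succ a,
      show (t+2+a).factorial = (t+2+a) * (t+1+a).factorial from by
        rw [show t+2+a = (t+1+a)+1 from by ring]; exact Nat.factorial_succ _,
      show (t+1).factorial = (t+1) * t.factorial from Nat.factorial_succ t]
    have h2 : ((t.factorial : ℂ)) ≠ 0 := Nat.cast_ne_zero.mpr (Nat.factorial_ne_zero t)
    have h3 : ((a.factorial : ℂ)) ≠ 0 := Nat.cast_ne_zero.mpr (Nat.factorial_ne_zero a)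
    have h4 : (((t+1+a).factorial : ℂ)) ≠ 0 := Nat.cast_ne_zero.mpr (Nat.factorial_ne_zero _)
    have h5 : (((t+2+a : ℕ)):ℂ) ≠ 0 := Nat.cast_ne_zero.mpr (by omega)
    push_cast at h5 ⊢
    field_simp
    ring





lemma neg_pow_sub (K j : ℕ) (h : j ≤ K) : (-1:ℂ)^(K-j) = (-1:ℂ)^K * (-1:ℂ)^j := by
  conv_rhs => rw [show K = (K-j)+j from by omega]
  rw [pow_add, mul_assoc, ← pow_add, ← two_mul, pow_mul]
  norm_num

lemma rowbal (K mm : ℕ) (h2 : 2 ≤ mm) (hmn : mm ≤ K + 2) :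
    ∑ k ∈ range (K+2), (-1:ℂ)^k * ((k:ℂ)+1) * ((mm.choose (K+1-k)) : ℂ) = 0 := by
  rw [← Finset.sum_range_reflect]
  have step : ∀ j ∈ range (K+2),
      (-1:ℂ)^(K+2-1-j) * ((((K+2-1-j) : ℕ):ℂ)+1) * ((mm.choose (K+1-(K+2-1-j))) : ℂ)
      = (-1:ℂ)^(K+1) * (-1:ℂ)^j * (((K:ℂ)+2) - j) * ((mm.choose j) : ℂ) := by
    intro j hj
    rw [Finset.mem_range] at hj
    rw [show K+2-1-j = K+1-j from by omega, show K+1-(K+1-j) = j from by omega,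
      neg_pow_sub (K+1) j (by omega), Nat.cast_sub (by omega : j ≤ K+1)]
    push_cast
    ring
  rw [Finset.sum_congr rfl step]
  have ext : ∑ j ∈ range (K+3), (-1:ℂ)^(K+1) * (-1:ℂ)^j * (((K:ℂ)+2) - j) * ((mm.choose j) : ℂ)
      = ∑ j ∈ range (K+2), (-1:ℂ)^(K+1) * (-1:ℂ)^j * (((K:ℂ)+2) - j) * ((mm.choose j) : ℂ) := by
    rw [Finset.sum_range_succ]
    push_cast
    ring_nf
  rw [← ext]
  have split : ∀ j, (-1:ℂ)^(K+1) * (-1:ℂ)^j * (((K:ℂ)+2) - j) * ((mm.choose j) : ℂ)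
      = (-1:ℂ)^(K+1) * (((K:ℂ)+2) * ((-1:ℂ)^j * (mm.choose j))
          - ((-1:ℂ)^j * (mm.choose j) * j)) := by
    intro j; ring
  rw [Finset.sum_congr rfl (fun j _ => split j), ← Finset.mul_sum, Finset.sum_sub_distrib,
    ← Finset.mul_sum]
  rw [alt0 mm (K+3) (by omega) (by omega), alt1 mm (K+3) h2 (by omega)]
  ring

lemma Dnonzero (K t : ℕ) (h1 : 1 ≤ t) (ht : t ≤ K + 1) :
    ∑ k ∈ range (K+1), (-1:ℂ)^k * (((k:ℂ)+1)/((k:ℂ)+3)) * (t.choose (K - k) : ℂ) ≠ 0 := by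
  rw [← Finset.sum_range_reflect]
  have step : ∀ j ∈ range (K+1),
      (-1:ℂ)^(K+1-1-j) * (((((K+1-1-j):ℕ):ℂ)+1)/((((K+1-1-j):ℕ):ℂ)+3)) * ((t.choose (K-(K+1-1-j))) : ℂ)
      = (-1:ℂ)^K * ((-1:ℂ)^j * (((K:ℂ)+1) - j)/(((K:ℂ)+3) - j) * ((t.choose j) : ℂ)) := by
    intro j hj
    rw [Finset.mem_range] at hj
    rw [show K+1-1-j = K-j from by omega, show K-(K-j) = j from by omega,
      neg_pow_sub K j (by omega), Nat.cast_sub (by omega : j ≤ K)]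
    push_cast
    ring
  rw [Finset.sum_congr rfl step, ← Finset.mul_sum]
  have ext : ∑ j ∈ range (K+2), (-1:ℂ)^j * (((K:ℂ)+1) - j)/(((K:ℂ)+3) - j) * ((t.choose j) : ℂ)
      = ∑ j ∈ range (K+1), (-1:ℂ)^j * (((K:ℂ)+1) - j)/(((K:ℂ)+3) - j) * ((t.choose j) : ℂ) := by
    rw [Finset.sum_range_succ]
    push_cast
    ring_nf
  rw [← ext]
  have hd : ∀ j ∈ range (K+2), ((K:ℂ)+3) - j ≠ 0 := by
    intro j hj
    rw [Finset.mem_range] at hj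
    rw [show ((K:ℂ)+3) - (j:ℂ) = ((K+3-j : ℕ):ℂ) from by
      rw [Nat.cast_sub (by omega)]; push_cast; ring]
    exact Nat.cast_ne_zero.mpr (by omega)
  have split : ∀ j ∈ range (K+2), (-1:ℂ)^j * (((K:ℂ)+1) - j)/(((K:ℂ)+3) - j) * ((t.choose j) : ℂ)
      = (-1:ℂ)^j * (t.choose j : ℂ)
        - 2 * ((-1:ℂ)^j * (t.choose j : ℂ) / (((K+3:ℕ):ℂ) - (j:ℂ))) := by
    intro j hj
    have h := hd j hj
    have h' : (((K+3:ℕ)):ℂ) - (j:ℂ) ≠ 0 := by push_cast; exact h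
    field_simp
    push_cast
    ring
  rw [Finset.sum_congr rfl split, Finset.sum_sub_distrib]
  rw [alt0 t (K+2) h1 (by omega)]
  have trunc : ∑ j ∈ range (K+2), 2 * ((-1:ℂ)^j * (t.choose j : ℂ) / (((K+3:ℕ):ℂ) - (j:ℂ)))
      = ∑ j ∈ range (t+1), 2 * ((-1:ℂ)^j * (t.choose j : ℂ) / (((K+3:ℕ):ℂ) - (j:ℂ))) := by
    refine (Finset.sum_subset (Finset.range_subset_range.mpr (by omega)) ?_).symm
    intro j _ hj
    rw [Finset.mem_range, not_lt] at hj
    rw [Nat.choose_eq_zero_of_lt (by omega)]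
    simp
  rw [trunc]
  have tv := Tval t (K+3) (by omega)
  rw [← Finset.mul_sum, tv, show K+3-t-1 = K+2-t from by omega, zero_sub]
  apply mul_ne_zero (pow_ne_zero _ (by norm_num : (-1:ℂ) ≠ 0))
  rw [neg_ne_zero]
  apply mul_ne_zero (by norm_num : (2:ℂ) ≠ 0)
  apply div_ne_zero
  · exact mul_ne_zero (mul_ne_zero (pow_ne_zero _ (by norm_num : (-1:ℂ) ≠ 0))
      (Nat.cast_ne_zero.mpr (Nat.factorial_ne_zero _))) (Nat.cast_ne_zero.mpr (Nat.factorial_ne_zero _))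
  · exact Nat.cast_ne_zero.mpr (Nat.factorial_ne_zero _)
theorem stmt19 (n m : ℕ) (hn : 3 ≤ n) (hm : 1 ≤ m) (hmn : m ≤ n - 1) :
    let gpoly : Fin (n - 1) → MvPolynomial (Fin (n - 1)) ℂ := fun ℓ =>
      (X ℓ) ^ 3 * ∑ k ∈ Finset.range (n - 1),
        MvPolynomial.C ((-1 : ℂ) ^ k * ((k : ℂ) + 1) / ((k : ℂ) + 3)) * (X ℓ) ^ k *
          MvPolynomial.esymm (Fin (n - 1)) ℂ (n - 2 - k)
    let p : Fin (n - 1) → ℂ := fun i => if (i : ℕ) < m then 1 else 0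
    let J : Matrix (Fin (n - 1)) (Fin (n - 1)) ℂ := fun i j =>
      MvPolynomial.eval p (MvPolynomial.pderiv j (gpoly i))
    (∀ i : Fin (n - 1), m ≤ (i : ℕ) → ∀ j, J i j = 0) ∧
      (∀ i i' : Fin (n - 1), (i : ℕ) < m → (i' : ℕ) < m → ∀ j, J i j = J i' j) ∧
      J.rank = 1 := by
  intro gpoly p J
  obtain ⟨K, rfl⟩ : ∃ K, n = K + 3 := ⟨n - 3, by omega⟩
  have hmK : m ≤ K + 2 := by omega
  set c : ℕ → ℂ := fun k => (-1 : ℂ) ^ k * ((k : ℂ) + 1) / ((k : ℂ) + 3) with hc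
  have hp1 : ∀ i : Fin (K + 3 - 1), (i : ℕ) < m → p i = 1 := fun i h => if_pos h
  have hp0 : ∀ i : Fin (K + 3 - 1), m ≤ (i : ℕ) → p i = 0 := fun i h => if_neg (by omega)
  have hes : ∀ r, eval p (esymm (Fin (K + 3 - 1)) ℂ r) = (m.choose r : ℂ) :=
    fun r => eval_esymm (K + 3 - 1) m (by omega) r
  have hpd : ∀ (r : ℕ) (j : Fin (K + 3 - 1)),
      eval p (pderiv j (esymm (Fin (K + 3 - 1)) ℂ (r + 1)))
      = if (j : ℕ) < m then ((m - 1).choose r : ℂ) else (m.choose r : ℂ) :=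
    fun r j => eval_pderiv_esymm (K + 3 - 1) m (by omega) r j
  -- Part 1
  have part1 : ∀ i : Fin (K + 3 - 1), m ≤ (i : ℕ) → ∀ j, J i j = 0 := by
    intro i hi j
    have hp : p i = 0 := hp0 i hi
    simp only [J, gpoly]
    rw [pderiv_mul, map_add, map_mul, map_mul]
    have e1 : eval p ((X i : MvPolynomial (Fin (K + 3 - 1)) ℂ) ^ 3) = 0 := by
      rw [map_pow, eval_X, hp]; norm_num
    have e2 : eval p (pderiv j ((X i : MvPolynomial (Fin (K + 3 - 1)) ℂ) ^ 3)) = 0 := by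
      rw [pderiv_pow, map_mul, map_mul, map_pow, eval_X, hp]
      norm_num
    rw [e1, e2, zero_mul, zero_mul, add_zero]
  -- the common row tail
  set W : Fin (K + 3 - 1) → ℂ := fun j => ∑ k ∈ Finset.range (K + 1),
    c k * (if (j : ℕ) < m then (((m - 1).choose (K - k)) : ℂ) else ((m.choose (K - k)) : ℂ))
    with hW
  have hck : ∀ k : ℕ, c k * ((k : ℂ) + 3) = (-1 : ℂ) ^ k * ((k : ℂ) + 1) := by
    intro k
    have h3 : ((k : ℂ) + 3) ≠ 0 := by
      have : (((k + 3 : ℕ)) : ℂ) ≠ 0 := Nat.cast_ne_zero.mpr (by omega)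
      push_cast at this; exact this
    rw [hc]
    field_simp
  -- row formula for i < m
  have hrow : ∀ i : Fin (K + 3 - 1), (i : ℕ) < m → ∀ j,
      J i j = (if j = i then
        ∑ k ∈ Finset.range (K + 2), (-1 : ℂ) ^ k * ((k : ℂ) + 1) * (m.choose (K + 1 - k) : ℂ)
        else 0) + W j := by
    intro i hi j
    have hXi : eval p (X i : MvPolynomial (Fin (K + 3 - 1)) ℂ) = 1 := by
      rw [eval_X]; exact hp1 i hi
    simp only [J, gpoly]
    rw [pderiv_mul, map_add, map_mul, map_mul]
    have e1 : eval p ((X i : MvPolynomial (Fin (K + 3 - 1)) ℂ) ^ 3) = 1 := by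
      rw [map_pow, hXi, one_pow]
    have e2 : eval p (pderiv j ((X i : MvPolynomial (Fin (K + 3 - 1)) ℂ) ^ 3))
        = if j = i then 3 else 0 := by
      rw [pderiv_pow, map_mul, map_mul, map_pow, hXi, one_pow]
      by_cases hji : j = i
      · subst hji; rw [pderiv_X_self]; simp
      · rw [pderiv_X_of_ne (fun h => hji h.symm)]; simp [hji]
    have epow : ∀ k : ℕ, eval p (pderiv j ((X i : MvPolynomial (Fin (K + 3 - 1)) ℂ) ^ k))
        = if j = i then (k : ℂ) else 0 := by
      intro k
      rw [pderiv_pow, map_mul, map_mul, map_pow, hXi, one_pow]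
      by_cases hji : j = i
      · subst hji; rw [pderiv_X_self]; simp
      · rw [pderiv_X_of_ne (fun h => hji h.symm)]; simp [hji]
    have eF : eval p (∑ k ∈ Finset.range (K + 3 - 1),
        MvPolynomial.C (c k) * (X i) ^ k * esymm (Fin (K + 3 - 1)) ℂ (K + 3 - 2 - k))
        = ∑ k ∈ Finset.range (K + 2), c k * ((m.choose (K + 1 - k)) : ℂ) := by
      rw [map_sum]
      refine Finset.sum_congr rfl fun k hk => ?_
      rw [map_mul, map_mul, eval_C, map_pow, hXi, one_pow, mul_one,
        show K + 3 - 2 - k = K + 1 - k from by omega, hes]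
    have hterm : ∀ k ∈ Finset.range (K + 2),
        eval p (pderiv j (MvPolynomial.C (c k) * (X i) ^ k
          * esymm (Fin (K + 3 - 1)) ℂ (K + 3 - 2 - k)))
        = (if j = i then c k * (k : ℂ) * ((m.choose (K + 1 - k)) : ℂ) else 0)
          + (if k ≤ K then c k * (if (j : ℕ) < m then (((m - 1).choose (K - k)) : ℂ)
              else ((m.choose (K - k)) : ℂ)) else 0) := by
      intro k hk
      rw [Finset.mem_range] at hk
      rw [pderiv_mul, pderiv_C_mul]
      by_cases hkK : k ≤ K
      · rw [show K + 3 - 2 - k = (K - k) + 1 from by omega]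
        simp only [map_add, map_mul, map_pow, eval_C, hXi, one_pow, mul_one, epow k,
          hpd, hes]
        rw [if_pos hkK, show K + 1 - k = K - k + 1 from by omega]
        by_cases hji : j = i
        · rw [if_pos hji, if_pos hji]
        · rw [if_neg hji, if_neg hji]; ring
      · have hk1 : k = K + 1 := by omega
        subst hk1
        rw [show K + 3 - 2 - (K + 1) = 0 from by omega, esymm_zero, pderiv_one]
        simp only [map_add, map_mul, map_pow, map_zero, map_one, eval_C, hXi, one_pow,
          mul_one, mul_zero, add_zero, epow]
        rw [if_neg hkK, show K + 1 - (K + 1) = 0 from by omega, Nat.choose_zero_right]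
        by_cases hji : j = i
        · rw [if_pos hji, if_pos hji]; push_cast; ring
        · rw [if_neg hji, if_neg hji]; ring
    have eDF : eval p (pderiv j (∑ k ∈ Finset.range (K + 3 - 1),
        MvPolynomial.C (c k) * (X i) ^ k * esymm (Fin (K + 3 - 1)) ℂ (K + 3 - 2 - k)))
        = (if j = i then ∑ k ∈ Finset.range (K + 2), c k * (k : ℂ) * ((m.choose (K + 1 - k)) : ℂ)
            else 0) + W j := by
      rw [map_sum, map_sum, Finset.sum_congr (show Finset.range (K + 3 - 1) = Finset.range (K + 2) from rfl) hterm,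
        Finset.sum_add_distrib]
      congr 1
      · by_cases hji : j = i
        · simp [hji]
        · simp [hji]
      · rw [hW]
        rw [← Finset.sum_subset (Finset.range_subset_range.mpr (by omega : K + 1 ≤ K + 2))]
        · refine Finset.sum_congr rfl fun k hk => ?_
          rw [Finset.mem_range] at hk
          rw [if_pos (by omega : k ≤ K)]
        · intro k _ hk
          rw [Finset.mem_range, not_lt] at hk
          rw [if_neg (by omega)]
    rw [e1, e2, eF, eDF, one_mul]
    by_cases hji : j = i
    · rw [if_pos hji, if_pos hji, if_pos hji]
      rw [← add_assoc]
      congr 1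
      rw [Finset.mul_sum, ← Finset.sum_add_distrib]
      refine Finset.sum_congr rfl fun k hk => ?_
      have := hck k
      linear_combination (((m.choose (K + 1 - k)) : ℂ)) * this
    · rw [if_neg hji, if_neg hji, if_neg hji]
      ring
  -- Part 2
  have part2 : ∀ i i' : Fin (K + 3 - 1), (i : ℕ) < m → (i' : ℕ) < m → ∀ j, J i j = J i' j := by
    intro i i' hi hi' j
    by_cases hm1 : m = 1
    · have : i = i' := Fin.ext (by omega)
      rw [this]
    · have hTOT : ∑ k ∈ Finset.range (K + 2),
          (-1 : ℂ) ^ k * ((k : ℂ) + 1) * (m.choose (K + 1 - k) : ℂ) = 0 :=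
        rowbal K m (by omega) hmK
      rw [hrow i hi j, hrow i' hi' j, hTOT]
      simp
  refine ⟨part1, part2, ?_⟩
  -- Part 3 : rank
  have hNpos : 0 < K + 3 - 1 := by omega
  set i₀ : Fin (K + 3 - 1) := ⟨0, hNpos⟩ with hi₀def
  have hi₀ : (i₀ : ℕ) < m := by simp [hi₀def]; omega
  -- find a nonzero entry in row i₀
  have hWne : ∃ j₀ : Fin (K + 3 - 1), j₀ ≠ i₀ ∧ W j₀ ≠ 0 := by
    have hDD : ∀ (t : ℕ), 1 ≤ t → t ≤ K + 1 →
        (∑ k ∈ Finset.range (K + 1), c k * ((t.choose (K - k)) : ℂ)) ≠ 0 := by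
      intro t h1 h2
      have := Dnonzero K t h1 h2
      intro hzero
      apply this
      rw [← hzero]
      refine Finset.sum_congr rfl fun k _ => ?_
      rw [hc]
      ring
    by_cases hmm : m ≤ K + 1
    · refine ⟨⟨K + 1, by omega⟩, ?_, ?_⟩
      · intro h
        have := congrArg (fun x : Fin (K + 3 - 1) => (x : ℕ)) h
        simp [hi₀def] at this
      · rw [hW]
        simp only
        rw [Finset.sum_congr rfl (fun k _ => by
          rw [if_neg (show ¬ ((K + 1 : ℕ) < m) from by simp; omega)])]
        exact hDD m hm hmm
    · have hm2 : m = K + 2 := by omega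
      refine ⟨⟨1, by omega⟩, ?_, ?_⟩
      · intro h
        have := congrArg (fun x : Fin (K + 3 - 1) => (x : ℕ)) h
        simp [hi₀def] at this
      · rw [hW]
        simp only
        rw [Finset.sum_congr rfl (fun k _ => by
          rw [if_pos (show ((1 : ℕ) < m) from by omega), show m - 1 = K + 1 from by omega])]
        exact hDD (K + 1) (by omega) (by omega)
  obtain ⟨j₀, hj₀ne, hWj₀⟩ := hWne
  have hvj₀ : J i₀ j₀ ≠ 0 := by
    rw [hrow i₀ hi₀ j₀, if_neg hj₀ne, zero_add]
    exact hWj₀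
  have hcol : ∀ i j, J i j = p i * J i₀ j := by
    intro i j
    by_cases hi : (i : ℕ) < m
    · rw [hp1 i hi, one_mul]
      exact part2 i i₀ hi hi₀ j
    · rw [hp0 i (by omega), zero_mul]
      exact part1 i (by omega) j
  have hsum : ∀ (x : Fin (K + 3 - 1) → ℂ) (i : Fin (K + 3 - 1)),
      ∑ j, J i j * x j = p i * ∑ j, J i₀ j * x j := by
    intro x i
    rw [Finset.mul_sum]
    refine Finset.sum_congr rfl fun j _ => ?_
    rw [hcol i j]; ring
  have hrange : LinearMap.range (Matrix.mulVecLin J) = Submodule.span ℂ {p} := by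
    apply le_antisymm
    · rintro y ⟨x, rfl⟩
      rw [Submodule.mem_span_singleton]
      refine ⟨∑ j, J i₀ j * x j, ?_⟩
      ext i
      rw [Matrix.mulVecLin_apply]
      simp only [Matrix.mulVec, dotProduct, Pi.smul_apply, smul_eq_mul]
      rw [hsum x i]
      ring
    · rw [Submodule.span_singleton_le_iff_mem]
      refine ⟨(J i₀ j₀)⁻¹ • (Pi.single j₀ 1 : Fin (K + 3 - 1) → ℂ), ?_⟩
      rw [map_smul, Matrix.mulVecLin_apply, Matrix.mulVec_single]
      ext i
      simp only [Pi.smul_apply, smul_eq_mul, op_smul_eq_mul, Matrix.col_apply]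
      rw [mul_one, hcol i j₀, mul_comm (p i), ← mul_assoc, inv_mul_cancel₀ hvj₀, one_mul]
  rw [Matrix.rank, hrange]
  have hpne : p ≠ 0 := by
    intro h
    have := congrFun h i₀
    rw [hp1 i₀ hi₀] at this
    simp at this
  exact finrank_span_singleton hpne
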